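/- Bracketing Glivenko–Cantelli theorem. Let (M, 𝒜, μ) be a probability space, and let X₁, X₂, … be independent M-valued random variables on a probability space, each with law μ. Let 𝔉 be a class of measurable functions f : M → ℝ such that for every ε > 0 there exist finitely many pairs (l₁,u₁), …, (l_N, u_N) of μ-integrable functions with ∫(u_k − l_k) dμ ≤ ε for each k, and such that every f ∈ 𝔉 satisfies l_k ≤ f ≤ u_k pointwise for some k. Then every f ∈ 𝔉 is μ-integrable and, almost surely, sup_{f ∈ 𝔉} | (1/n) Σ_{i=1}^n f(X_i) − ∫_M f dμ | → 0 as n → ∞. -/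

import Mathlib

open MeasureTheory Filter Topology

lemma slln_comp
    {Ω M : Type*} [MeasurableSpace Ω] [MeasurableSpace M]
    (P : Measure Ω) [IsProbabilityMeasure P]
    (μ : Measure M) [IsProbabilityMeasure μ]
    (X : ℕ → Ω → M) (hXmeas : ∀ i, Measurable (X i))
    (hXindep : ProbabilityTheory.iIndepFun X P)
    (hXlaw : ∀ i, Measure.map (X i) P = μ)
    (g : M → ℝ) (hg : Integrable g μ) :
    ∀ᵐ ω ∂P, Tendsto (fun n : ℕ => (∑ i ∈ Finset.range n, g (X i ω)) / n)
      atTop (𝓝 (∫ x, g x ∂μ)) := by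
  set g' := hg.1.mk g with hg'def
  have hg'sm : StronglyMeasurable g' := hg.1.stronglyMeasurable_mk
  have hgg' : g =ᵐ[μ] g' := hg.1.ae_eq_mk
  have hg'int : Integrable g' μ := hg.congr hgg'
  set Y : ℕ → Ω → ℝ := fun i ω => g' (X i ω) with hYdef
  have hYint : Integrable (Y 0) P := by
    have : Integrable g' (Measure.map (X 0) P) := by rw [hXlaw 0]; exact hg'int
    exact (integrable_map_measure hg'sm.aestronglyMeasurable
      (hXmeas 0).aemeasurable).mp this
  have hYindep : Pairwise (Function.onFun (ProbabilityTheory.IndepFun · · P) Y) := fun i j hij =>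
    (hXindep.indepFun hij).comp hg'sm.measurable hg'sm.measurable
  have hYident : ∀ i, ProbabilityTheory.IdentDistrib (Y i) (Y 0) P P := fun i =>
    (ProbabilityTheory.IdentDistrib.comp
      ⟨(hXmeas i).aemeasurable, (hXmeas 0).aemeasurable, by rw [hXlaw i, hXlaw 0]⟩
      hg'sm.measurable)
  have hY := ProbabilityTheory.strong_law_ae_real Y hYint hYindep hYident
  have hlim : (∫ ω, Y 0 ω ∂P) = ∫ x, g x ∂μ := by
    rw [show (∫ ω, Y 0 ω ∂P) = ∫ x, g' x ∂(Measure.map (X 0) P) from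
      (integral_map (hXmeas 0).aemeasurable hg'sm.aestronglyMeasurable).symm,
      hXlaw 0]
    exact (integral_congr_ae hgg').symm
  have hae : ∀ᵐ ω ∂P, ∀ i, g (X i ω) = g' (X i ω) := by
    rw [ae_all_iff]
    intro i
    have h1 : g =ᵐ[Measure.map (X i) P] g' := by rw [hXlaw i]; exact hgg'
    exact ae_eq_comp (hXmeas i).aemeasurable h1
  filter_upwards [hY, hae] with ω h1 h2
  have : (fun n : ℕ => (∑ i ∈ Finset.range n, g (X i ω)) / n)
      = fun n : ℕ => (∑ i ∈ Finset.range n, Y i ω) / n := by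
    funext n
    congr 1
    exact Finset.sum_congr rfl fun i _ => h2 i
  rw [this, ← hlim]
  exact h1

/-- Bracketing Glivenko–Cantelli theorem: if a class of measurable functions
admits, for every `ε > 0`, a finite cover by `ε`-brackets in `L¹(μ)`, then every member is
integrable and the empirical means converge to the true means uniformly over the class, almost
surely. -/
theorem bracketing_glivenko_cantelli
    {Ω M : Type*} [MeasurableSpace Ω] [MeasurableSpace M]
    (P : Measure Ω) [IsProbabilityMeasure P]
    (μ : Measure M) [IsProbabilityMeasure μ]
    (X : ℕ → Ω → M) (hXmeas : ∀ i, Measurable (X i))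
    (hXindep : ProbabilityTheory.iIndepFun X P)
    (hXlaw : ∀ i, Measure.map (X i) P = μ)
    (F : Set (M → ℝ)) (hFmeas : ∀ f ∈ F, Measurable f)
    (hbracket : ∀ ε : ℝ, 0 < ε → ∃ N : ℕ, ∃ l u : Fin N → M → ℝ,
      (∀ k, Integrable (l k) μ) ∧ (∀ k, Integrable (u k) μ) ∧
      (∀ k, (∫ x, (u k x - l k x) ∂μ) ≤ ε) ∧
      (∀ f ∈ F, ∃ k, ∀ x, l k x ≤ f x ∧ f x ≤ u k x)) :
    (∀ f ∈ F, Integrable f μ)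
      ∧ ∀ᵐ ω ∂P, Tendsto
          (fun n : ℕ => ⨆ f : F,
            |(1 / (n : ℝ)) * ∑ i ∈ Finset.range n, (f : M → ℝ) (X i ω)
              - ∫ x, (f : M → ℝ) x ∂μ|)
          atTop (𝓝 0) := by
  have hFint : ∀ f ∈ F, Integrable f μ := by
    intro f hf
    obtain ⟨N₀, l₀, u₀, hl₀, hu₀, -, hcov₀⟩ := hbracket 1 one_pos
    obtain ⟨k, hk⟩ := hcov₀ f hf
    refine ((hl₀ k).abs.add (hu₀ k).abs).mono'
      (hFmeas f hf).aestronglyMeasurable (ae_of_all _ fun x => ?_)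
    have h1 := (hk x).1
    have h2 := (hk x).2
    have := le_abs_self (u₀ k x)
    have := neg_abs_le (l₀ k x)
    have := abs_nonneg (l₀ k x)
    have := abs_nonneg (u₀ k x)
    rw [Real.norm_eq_abs, abs_le]
    constructor <;> · simp only [Pi.add_apply]; linarith
  refine ⟨hFint, ?_⟩
  choose N l u hl hu hεint hcov using fun m : ℕ => hbracket (1 / (m + 1)) (by positivity)
  have hslln : ∀ᵐ ω ∂P, ∀ (m : ℕ) (k : Fin (N m)),
      Tendsto (fun n : ℕ => (∑ i ∈ Finset.range n, l m k (X i ω)) / n)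
        atTop (𝓝 (∫ x, l m k x ∂μ)) ∧
      Tendsto (fun n : ℕ => (∑ i ∈ Finset.range n, u m k (X i ω)) / n)
        atTop (𝓝 (∫ x, u m k x ∂μ)) := by
    rw [ae_all_iff]
    intro m
    rw [ae_all_iff]
    intro k
    exact (slln_comp P μ X hXmeas hXindep hXlaw (l m k) (hl m k)).and
      (slln_comp P μ X hXmeas hXindep hXlaw (u m k) (hu m k))
  filter_upwards [hslln] with ω hω
  rw [NormedAddCommGroup.tendsto_nhds_zero]
  intro ε hε
  obtain ⟨m, hm⟩ := exists_nat_gt (2 / ε)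
  have hmpos : (0 : ℝ) < (m : ℝ) + 1 := by positivity
  have hm2 : 1 / ((m : ℝ) + 1) < ε / 2 := by
    rw [div_lt_div_iff₀ hmpos (by norm_num : (0:ℝ) < 2)]
    have : 2 / ε < (m : ℝ) + 1 := by linarith
    rw [div_lt_iff₀ hε] at this
    nlinarith
  have hev : ∀ᶠ n : ℕ in atTop, ∀ k : Fin (N m),
      |(∑ i ∈ Finset.range n, l m k (X i ω)) / n - ∫ x, l m k x ∂μ| < ε / 4 ∧
      |(∑ i ∈ Finset.range n, u m k (X i ω)) / n - ∫ x, u m k x ∂μ| < ε / 4 := by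
    rw [eventually_all]
    intro k
    have h1 := Metric.tendsto_atTop.mp (hω m k).1 (ε / 4) (by positivity)
    have h2 := Metric.tendsto_atTop.mp (hω m k).2 (ε / 4) (by positivity)
    obtain ⟨N₁, hN₁⟩ := h1
    obtain ⟨N₂, hN₂⟩ := h2
    refine eventually_atTop.2 ⟨max N₁ N₂, fun n hn => ⟨?_, ?_⟩⟩
    · have := hN₁ n (le_trans (le_max_left _ _) hn)
      rwa [Real.dist_eq] at this
    · have := hN₂ n (le_trans (le_max_right _ _) hn)
      rwa [Real.dist_eq] at this
  filter_upwards [hev] with n hn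
  have hsup_nonneg : (0 : ℝ) ≤ ⨆ f : F,
      |(1 / (n : ℝ)) * ∑ i ∈ Finset.range n, (f : M → ℝ) (X i ω)
        - ∫ x, (f : M → ℝ) x ∂μ| :=
    Real.iSup_nonneg fun f => abs_nonneg _
  rw [Real.norm_eq_abs, abs_of_nonneg hsup_nonneg]
  have hbound : ∀ f : F,
      |(1 / (n : ℝ)) * ∑ i ∈ Finset.range n, (f : M → ℝ) (X i ω)
        - ∫ x, (f : M → ℝ) x ∂μ| ≤ ε / 4 + ε / 2 := by
    intro f
    obtain ⟨k, hk⟩ := hcov m f f.2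
    obtain ⟨hLk, hUk⟩ := hn k
    have hfint : Integrable (f : M → ℝ) μ := hFint f f.2
    have hnn : (0 : ℝ) ≤ 1 / (n : ℝ) := by positivity
    have hempU : (1 / (n : ℝ)) * ∑ i ∈ Finset.range n, (f : M → ℝ) (X i ω)
        ≤ (∑ i ∈ Finset.range n, u m k (X i ω)) / n :=
      calc (1 / (n : ℝ)) * ∑ i ∈ Finset.range n, (f : M → ℝ) (X i ω)
          ≤ (1 / (n : ℝ)) * ∑ i ∈ Finset.range n, u m k (X i ω) :=
            mul_le_mul_of_nonneg_left
              (Finset.sum_le_sum fun i _ => (hk (X i ω)).2) hnn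
        _ = (∑ i ∈ Finset.range n, u m k (X i ω)) / n := one_div_mul_eq_div _ _
    have hempL : (∑ i ∈ Finset.range n, l m k (X i ω)) / n
        ≤ (1 / (n : ℝ)) * ∑ i ∈ Finset.range n, (f : M → ℝ) (X i ω) :=
      calc (∑ i ∈ Finset.range n, l m k (X i ω)) / n
          = (1 / (n : ℝ)) * ∑ i ∈ Finset.range n, l m k (X i ω) :=
            (one_div_mul_eq_div _ _).symm
        _ ≤ (1 / (n : ℝ)) * ∑ i ∈ Finset.range n, (f : M → ℝ) (X i ω) :=
            mul_le_mul_of_nonneg_left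
              (Finset.sum_le_sum fun i _ => (hk (X i ω)).1) hnn
    have hIU : (∫ x, u m k x ∂μ) - ∫ x, (f : M → ℝ) x ∂μ ≤ 1 / ((m : ℝ) + 1) := by
      rw [← integral_sub (hu m k) hfint]
      refine le_trans (integral_mono ((hu m k).sub hfint) ((hu m k).sub (hl m k))
        fun x => sub_le_sub_left (hk x).1 _) (hεint m k)
    have hIL : (∫ x, (f : M → ℝ) x ∂μ) - ∫ x, l m k x ∂μ ≤ 1 / ((m : ℝ) + 1) := by
      rw [← integral_sub hfint (hl m k)]
      refine le_trans (integral_mono (hfint.sub (hl m k)) ((hu m k).sub (hl m k))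
        fun x => sub_le_sub_right (hk x).2 _) (hεint m k)
    rw [abs_lt] at hLk hUk
    rw [abs_le]
    constructor <;> linarith
  have := Real.iSup_le hbound (by positivity)
  calc (⨆ f : F, |(1 / (n : ℝ)) * ∑ i ∈ Finset.range n, (f : M → ℝ) (X i ω)
        - ∫ x, (f : M → ℝ) x ∂μ|) ≤ ε / 4 + ε / 2 := this
    _ < ε := by linarith
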